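/- Let n ≥ 1, s ∈ (0,1) with 2s + ε < 1 for some ε > 0, and R > 0. There is a constant C(R) such that for any function v on ℝ^n × ℝ with parabolic Hölder seminorm [v] := sup_{(x,t),(y,τ)∈Q_R} |v(x,t)-v(y,τ)|/(|x-y|^{2s+ε} + |t-τ|^{s+ε/2}) finite, and any (x,t) ∈ Q_{R/3}, one has |∫_{-R²}^t ∫_{B_R} (v(x,t) - v(y,τ)) M(x-y, t-τ) dy dτ| ≤ C(R)·[v]. -/

import Mathlib

open MeasureTheory Real

noncomputable def heatM (n : ℕ) (s c : ℝ) (x : EuclideanSpace ℝ (Fin n)) (t : ℝ) : ℝ :=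
  c * t ^ (-((n : ℝ) / 2 + 1 + s)) * Real.exp (-‖x‖ ^ 2 / (4 * t))

lemma aux_rpow_mul_exp_le {q u : ℝ} (hq0 : 0 ≤ q) (hq1 : q ≤ 1) (hu : 0 ≤ u) :
    u ^ q * Real.exp (-u) ≤ 1 := by
  rcases le_total u 1 with h | h
  · have h1 : u ^ q ≤ 1 := Real.rpow_le_one hu h hq0
    have h2 : Real.exp (-u) ≤ 1 := Real.exp_le_one_iff.2 (by linarith)
    calc u ^ q * Real.exp (-u) ≤ 1 * 1 :=
          mul_le_mul h1 h2 (Real.exp_pos _).le zero_le_one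
      _ = 1 := by ring
  · have h1 : u ^ q ≤ u := by
      calc u ^ q ≤ u ^ (1:ℝ) := Real.rpow_le_rpow_of_exponent_le h hq1
        _ = u := Real.rpow_one u
    have h2 : u ≤ Real.exp u := by linarith [Real.add_one_le_exp u]
    have h3 : (0:ℝ) < Real.exp u := Real.exp_pos u
    rw [Real.exp_neg]
    calc u ^ q * (Real.exp u)⁻¹ ≤ Real.exp u * (Real.exp u)⁻¹ :=
          mul_le_mul_of_nonneg_right (h1.trans h2) (by positivity)
      _ = 1 := mul_inv_cancel₀ h3.ne'

lemma aux_integrable_gauss {n : ℕ} {b : ℝ} (hb : 0 < b) :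
    Integrable (fun z : EuclideanSpace ℝ (Fin n) => Real.exp (-b * ‖z‖^2)) := by
  have h1 := (GaussianFourier.integrable_cexp_neg_mul_sq_norm_add
    (V := EuclideanSpace ℝ (Fin n)) (b := (b:ℂ)) (by simpa using hb) 0 0).norm
  refine h1.congr (Filter.Eventually.of_forall fun z => ?_)
  simp only [Complex.norm_exp]
  norm_num
  left
  norm_cast

lemma aux_integral_gauss {n : ℕ} {b : ℝ} (hb : 0 < b) :
    ∫ z : EuclideanSpace ℝ (Fin n), Real.exp (-b * ‖z‖^2) = (π / b) ^ ((n:ℝ)/2) := by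
  rw [GaussianFourier.integral_rexp_neg_mul_sq_norm hb]
  simp [finrank_euclideanSpace]

set_option maxHeartbeats 1000000 in
theorem stmt16 (n : ℕ) (hn : 1 ≤ n) (s : ℝ) (hs : s ∈ Set.Ioo (0 : ℝ) 1)
    (cns : ℝ) (hcns : 0 < cns)
    (ε R : ℝ) (hε : 0 < ε) (hsmall : 2 * s + ε < 1) (hR : 0 < R) :
    ∃ C : ℝ, 0 < C ∧
      ∀ (v : EuclideanSpace ℝ (Fin n) × ℝ → ℝ) (L : ℝ), 0 ≤ L →
        (∀ p q : EuclideanSpace ℝ (Fin n) × ℝ,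
          ‖p.1‖ ≤ R → |p.2| ≤ R ^ 2 → ‖q.1‖ ≤ R → |q.2| ≤ R ^ 2 →
          |v p - v q| ≤ L * (‖p.1 - q.1‖ ^ (2 * s + ε) + |p.2 - q.2| ^ (s + ε / 2))) →
        ∀ (x : EuclideanSpace ℝ (Fin n)) (t : ℝ), ‖x‖ ≤ R / 3 → |t| ≤ R ^ 2 / 9 →
          |∫ τ in Set.Ioc (-R ^ 2) t, ∫ y in Metric.ball (0 : EuclideanSpace ℝ (Fin n)) R,
              (v (x, t) - v (y, τ)) * heatM n s cns (x - y) (t - τ)|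
            ≤ C * L := by
  obtain ⟨hs0, hs1⟩ := hs
  set E := EuclideanSpace ℝ (Fin n)
  set q : ℝ := s + ε / 2 with hqdef
  have hq0 : 0 < q := by simp only [hqdef]; linarith
  have hq1 : q ≤ 1 := by simp only [hqdef]; linarith
  set γ : ℝ := (n : ℝ) / 2 + 1 + s with hγdef
  have hγpos : 0 < γ := by
    have : (0:ℝ) ≤ (n:ℝ) := Nat.cast_nonneg n
    simp only [hγdef]; linarith
  set K₁ : ℝ := cns * ((8:ℝ) ^ q + 1) with hK₁def
  have hK₁ : 0 < K₁ := by positivity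
  set K₂ : ℝ := K₁ * (8 * π) ^ ((n:ℝ)/2) with hK₂def
  have hK₂ : 0 < K₂ := by positivity
  set A : ℝ := ∫ u in (0:ℝ)..(2*R^2), u ^ (ε/2 - 1) with hAdef
  have hA0 : 0 ≤ A := by
    refine intervalIntegral.integral_nonneg (by positivity) fun u hu => ?_
    exact Real.rpow_nonneg hu.1 _
  refine ⟨K₂ * A + 1, by nlinarith, ?_⟩
  intro v L hL hHol x t hx ht
  have hR2 : (0:ℝ) < R^2 := by positivity
  obtain ⟨ht1, ht2⟩ := abs_le.1 ht
  have htR : -R^2 < t := by nlinarith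
  have hep : (-1:ℝ) < ε/2 - 1 := by linarith
  -- the key pointwise-in-τ bound for the inner integral
  have key : ∀ τ ∈ Set.Ioc (-R^2) t,
      ‖∫ y in Metric.ball (0:E) R, (v (x, t) - v (y, τ)) * heatM n s cns (x - y) (t - τ)‖
        ≤ K₂ * L * (t - τ) ^ (ε/2 - 1) := by
    intro τ hτ
    set a : ℝ := t - τ with hadef
    have ha0 : 0 ≤ a := sub_nonneg.2 hτ.2
    rcases eq_or_lt_of_le ha0 with h0 | hapos
    · -- a = 0 : heatM vanishes
      have hM : ∀ y : E, heatM n s cns (x - y) a = 0 := by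
        intro y
        rw [heatM, ← h0, Real.zero_rpow (neg_lt_zero.2 hγpos).ne]
        ring
      have : (∫ y in Metric.ball (0:E) R,
          (v (x, t) - v (y, τ)) * heatM n s cns (x - y) a) = 0 := by
        rw [← integral_zero E ℝ (μ := volume.restrict (Metric.ball (0:E) R))]
        exact setIntegral_congr_fun measurableSet_ball fun y _ => by rw [hM]; ring
      rw [this, ← h0, Real.zero_rpow (by linarith : ε/2 - 1 ≠ 0)]
      simp
    · -- a > 0
      set b : ℝ := 1 / (8 * a) with hbdef
      have hbpos : 0 < b := by positivity
      have hGauss : Integrable (fun z : E => Real.exp (-b * ‖z‖^2)) := aux_integrable_gauss hbpos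
      have hGx : Integrable (fun y : E => Real.exp (-b * ‖x - y‖^2)) := hGauss.comp_sub_left x
      -- pointwise bound for the integrand
      have hpt : ∀ y : E, y ∈ Metric.ball (0:E) R →
          ‖(v (x, t) - v (y, τ)) * heatM n s cns (x - y) a‖
            ≤ (K₁ * L * a ^ (ε/2 - 1 - (n:ℝ)/2)) * Real.exp (-b * ‖x - y‖^2) := by
        intro y hy
        set z : E := x - y with hzdef
        have hy' : ‖y‖ ≤ R := by
          have := Metric.mem_ball.1 hy
          rw [dist_zero_right] at this; exact this.le
        have hτ1 : |τ| ≤ R^2 := by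
          refine abs_le.2 ⟨by linarith [hτ.1], ?_⟩
          have := hτ.2; nlinarith
        have hv : |v (x, t) - v (y, τ)| ≤ L * (‖z‖ ^ (2*s+ε) + a ^ q) := by
          have := hHol (x, t) (y, τ) (show ‖x‖ ≤ R by linarith)
            (show |t| ≤ R^2 from abs_le.2 ⟨by nlinarith, by nlinarith⟩)
            (show ‖y‖ ≤ R from hy') hτ1
          simpa [hzdef, hadef, abs_of_nonneg ha0, abs_of_nonneg (show (0:ℝ) ≤ t - τ from ha0)] using this
        have hheat : heatM n s cns z a = cns * a ^ (-γ) * Real.exp (-‖z‖^2 / (4*a)) := rfl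
        have hMnn : 0 ≤ heatM n s cns z a := by rw [hheat]; positivity
        -- split the exponential
        have hsplit : Real.exp (-‖z‖^2 / (4*a))
            = Real.exp (-(b * ‖z‖^2)) * Real.exp (-(b * ‖z‖^2)) := by
          rw [← Real.exp_add]
          congr 1
          field_simp [hbdef]
          rw [hbdef]; field_simp
          ring
        -- bound ‖z‖^{2s+ε} e^{-b‖z‖²} ≤ 8^q a^q
        have hA1 : ‖z‖ ^ (2*s+ε) * Real.exp (-(b * ‖z‖^2)) ≤ (8:ℝ) ^ q * a ^ q := by
          have h1 : ‖z‖ ^ (2*s+ε) = (8*a) ^ q * (b * ‖z‖^2) ^ q := by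
            rw [← Real.mul_rpow (by positivity) (by positivity)]
            have he : (8*a) * (b * ‖z‖^2) = ‖z‖^2 := by
              field_simp [hbdef]
              rw [hbdef]; field_simp
            rw [he, ← Real.rpow_natCast ‖z‖ 2, ← Real.rpow_mul (norm_nonneg z)]
            congr 1
            push_cast
            simp only [hqdef]
            ring
          rw [h1, mul_assoc]
          have h2 : (b * ‖z‖^2) ^ q * Real.exp (-(b * ‖z‖^2)) ≤ 1 :=
            aux_rpow_mul_exp_le hq0.le hq1 (by positivity)
          calc (8*a) ^ q * ((b * ‖z‖^2) ^ q * Real.exp (-(b * ‖z‖^2)))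
              ≤ (8*a) ^ q * 1 := by
                exact mul_le_mul_of_nonneg_left h2 (Real.rpow_nonneg (by positivity) _)
            _ = (8:ℝ) ^ q * a ^ q := by
                rw [mul_one, Real.mul_rpow (by norm_num) ha0]
        have hB1 : a ^ q * Real.exp (-(b * ‖z‖^2)) ≤ a ^ q :=
          mul_le_of_le_one_right (Real.rpow_nonneg ha0 _)
            (Real.exp_le_one_iff.2 (neg_nonpos.2 (by positivity)))
        -- combine
        have hcomb : (‖z‖ ^ (2*s+ε) + a ^ q) * Real.exp (-(b * ‖z‖^2))
            ≤ ((8:ℝ) ^ q + 1) * a ^ q := by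
          rw [add_mul]
          calc ‖z‖ ^ (2*s+ε) * Real.exp (-(b * ‖z‖^2)) + a ^ q * Real.exp (-(b * ‖z‖^2))
              ≤ (8:ℝ) ^ q * a ^ q + a ^ q := add_le_add hA1 hB1
            _ = ((8:ℝ) ^ q + 1) * a ^ q := by ring
        have hexp : -(b * ‖z‖^2) = -b * ‖z‖^2 := by ring
        have hMle : (‖z‖ ^ (2*s+ε) + a ^ q) * heatM n s cns z a
            ≤ K₁ * a ^ (ε/2 - 1 - (n:ℝ)/2) * Real.exp (-b * ‖z‖^2) := by
          rw [hheat, hsplit]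
          have hrw : cns * a ^ (-γ) * (Real.exp (-(b * ‖z‖^2)) * Real.exp (-(b * ‖z‖^2)))
              * (‖z‖ ^ (2*s+ε) + a ^ q)
              = cns * a ^ (-γ) * Real.exp (-(b * ‖z‖^2))
                * ((‖z‖ ^ (2*s+ε) + a ^ q) * Real.exp (-(b * ‖z‖^2))) := by ring
          calc (‖z‖ ^ (2*s+ε) + a ^ q) * (cns * a ^ (-γ)
                * (Real.exp (-(b * ‖z‖^2)) * Real.exp (-(b * ‖z‖^2))))
              = cns * a ^ (-γ) * Real.exp (-(b * ‖z‖^2))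
                * ((‖z‖ ^ (2*s+ε) + a ^ q) * Real.exp (-(b * ‖z‖^2))) := by ring
            _ ≤ cns * a ^ (-γ) * Real.exp (-(b * ‖z‖^2)) * (((8:ℝ) ^ q + 1) * a ^ q) := by
                refine mul_le_mul_of_nonneg_left hcomb ?_
                have := Real.rpow_nonneg ha0 (-γ)
                positivity
            _ = K₁ * (a ^ (-γ) * a ^ q) * Real.exp (-(b * ‖z‖^2)) := by
                rw [hK₁def]; ring
            _ = K₁ * a ^ (ε/2 - 1 - (n:ℝ)/2) * Real.exp (-b * ‖z‖^2) := by
                rw [← Real.rpow_add hapos, hexp]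
                congr 2
                simp only [hγdef, hqdef]
                ring
        calc ‖(v (x, t) - v (y, τ)) * heatM n s cns z a‖
            = |v (x, t) - v (y, τ)| * heatM n s cns z a := by
              rw [norm_mul, Real.norm_eq_abs, Real.norm_eq_abs, abs_of_nonneg hMnn]
          _ ≤ (L * (‖z‖ ^ (2*s+ε) + a ^ q)) * heatM n s cns z a :=
              mul_le_mul_of_nonneg_right hv hMnn
          _ = L * ((‖z‖ ^ (2*s+ε) + a ^ q) * heatM n s cns z a) := by ring
          _ ≤ L * (K₁ * a ^ (ε/2 - 1 - (n:ℝ)/2) * Real.exp (-b * ‖z‖^2)) :=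
              mul_le_mul_of_nonneg_left hMle hL
          _ = (K₁ * L * a ^ (ε/2 - 1 - (n:ℝ)/2)) * Real.exp (-b * ‖z‖^2) := by ring
      -- integrate the bound
      have hgint : Integrable
          (fun y : E => (K₁ * L * a ^ (ε/2 - 1 - (n:ℝ)/2)) * Real.exp (-b * ‖x - y‖^2))
          (volume.restrict (Metric.ball (0:E) R)) :=
        (hGx.restrict.const_mul _)
      have step1 : ‖∫ y in Metric.ball (0:E) R,
            (v (x, t) - v (y, τ)) * heatM n s cns (x - y) a‖
          ≤ ∫ y in Metric.ball (0:E) R,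
            (K₁ * L * a ^ (ε/2 - 1 - (n:ℝ)/2)) * Real.exp (-b * ‖x - y‖^2) := by
        refine norm_integral_le_of_norm_le hgint ?_
        exact (ae_restrict_mem measurableSet_ball).mono hpt
      have step2 : (∫ y in Metric.ball (0:E) R,
            (K₁ * L * a ^ (ε/2 - 1 - (n:ℝ)/2)) * Real.exp (-b * ‖x - y‖^2))
          ≤ K₂ * L * a ^ (ε/2 - 1) := by
        rw [integral_const_mul]
        have h1 : (∫ y in Metric.ball (0:E) R, Real.exp (-b * ‖x - y‖^2))
            ≤ ∫ y : E, Real.exp (-b * ‖x - y‖^2) :=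
          setIntegral_le_integral hGx (Filter.Eventually.of_forall fun y => (Real.exp_pos _).le)
        have h2 : (∫ y : E, Real.exp (-b * ‖x - y‖^2))
            = (π / b) ^ ((n:ℝ)/2) := by
          rw [integral_sub_left_eq_self (fun z : E => Real.exp (-b * ‖z‖^2)) volume x]
          exact aux_integral_gauss hbpos
        have h3 : (π / b) ^ ((n:ℝ)/2) = (8*π) ^ ((n:ℝ)/2) * a ^ ((n:ℝ)/2) := by
          rw [← Real.mul_rpow (by positivity) ha0]
          congr 1
          field_simp [hbdef]
          rw [hbdef]; field_simp
        have h4 : (∫ y in Metric.ball (0:E) R, Real.exp (-b * ‖x - y‖^2))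
            ≤ (8*π) ^ ((n:ℝ)/2) * a ^ ((n:ℝ)/2) := by
          rw [← h3, ← h2]; exact h1
        calc (K₁ * L * a ^ (ε/2 - 1 - (n:ℝ)/2))
              * ∫ y in Metric.ball (0:E) R, Real.exp (-b * ‖x - y‖^2)
            ≤ (K₁ * L * a ^ (ε/2 - 1 - (n:ℝ)/2)) * ((8*π) ^ ((n:ℝ)/2) * a ^ ((n:ℝ)/2)) := by
              refine mul_le_mul_of_nonneg_left h4 ?_
              have := Real.rpow_nonneg ha0 (ε/2 - 1 - (n:ℝ)/2)
              positivity
          _ = K₂ * L * (a ^ (ε/2 - 1 - (n:ℝ)/2) * a ^ ((n:ℝ)/2)) := by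
              rw [hK₂def]; ring
          _ = K₂ * L * a ^ (ε/2 - 1) := by
              rw [← Real.rpow_add hapos]
              congr 2
              ring
      exact step1.trans step2
  -- integrability of the outer bound
  have hInt2 : IntegrableOn (fun τ => (t - τ) ^ (ε/2 - 1)) (Set.Ioc (-R^2) t) := by
    have h2 := (intervalIntegral.intervalIntegrable_rpow' (a := 0) (b := t + R^2) hep).comp_sub_left t
    rw [intervalIntegrable_iff] at h2
    have he : Set.uIoc (t - 0) (t - (t + R^2)) = Set.Ioc (-R^2) t := by
      rw [Set.uIoc_comm, Set.uIoc_of_le (by linarith)]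
      congr 1 <;> ring
    rwa [he] at h2
  have houter : ‖∫ τ in Set.Ioc (-R^2) t, ∫ y in Metric.ball (0:E) R,
        (v (x, t) - v (y, τ)) * heatM n s cns (x - y) (t - τ)‖
      ≤ ∫ τ in Set.Ioc (-R^2) t, K₂ * L * (t - τ) ^ (ε/2 - 1) := by
    refine norm_integral_le_of_norm_le (hInt2.const_mul _) ?_
    exact (ae_restrict_mem measurableSet_Ioc).mono key
  have hval : (∫ τ in Set.Ioc (-R^2) t, K₂ * L * (t - τ) ^ (ε/2 - 1)) ≤ K₂ * L * A := by
    rw [integral_const_mul]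
    refine mul_le_mul_of_nonneg_left ?_ (by positivity)
    have e1 : (∫ τ in Set.Ioc (-R^2) t, (t - τ) ^ (ε/2 - 1))
        = ∫ τ in (-R^2)..t, (t - τ) ^ (ε/2 - 1) := by
      rw [intervalIntegral.integral_of_le htR.le]
    rw [e1, intervalIntegral.integral_comp_sub_left (fun u => u ^ (ε/2 - 1)) t]
    have e2 : t - t = (0:ℝ) := by ring
    have e3 : t - -R^2 = t + R^2 := by ring
    rw [e2, e3, hAdef]
    refine intervalIntegral.integral_mono_interval le_rfl (by linarith) (by nlinarith) ?_ ?_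
    · exact (ae_restrict_mem measurableSet_Ioc).mono fun u hu => Real.rpow_nonneg hu.1.le _
    · exact intervalIntegral.intervalIntegrable_rpow' hep
  rw [← Real.norm_eq_abs]
  calc ‖∫ τ in Set.Ioc (-R^2) t, ∫ y in Metric.ball (0:E) R,
        (v (x, t) - v (y, τ)) * heatM n s cns (x - y) (t - τ)‖
      ≤ K₂ * L * A := houter.trans hval
    _ ≤ (K₂ * A + 1) * L := by nlinarith
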